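/- Let A be an I-modal ririg with I finite, λ(x) = x · ∏_{m∈I} m(x), and X ⊆ A. Then the least I-filter containing X equals the up-set of { λ^l(x₁)·…·λ^l(xₙ) : x₁,…,xₙ ∈ X, l ∈ ℕ }. -/
import Mathlib


/-- An integral residuated rig (ririg). -/
class Ririg (A : Type*) extends CommMonoid A, SemilatticeSup A, OrderBot A, OrderTop A, HImp A where
  one_eq_top : (1 : A) = ⊤
  mul_sup : ∀ x y z : A, x * (y ⊔ z) = x * y ⊔ x * z
  mul_bot : ∀ x : A, x * ⊥ = ⊥
  residuation : ∀ a b c : A, a * b ≤ c ↔ a ≤ b ⇨ c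

/-- A modal operator on a ririg. -/
def IsModal {A : Type*} [Ririg A] (m : A → A) : Prop :=
  m 1 = 1 ∧ ∀ x y : A, m (x ⇨ y) ≤ m x ⇨ m y

/-- Interpretation of an I-block (finite composition of modal operators). -/
def blockApp {A ι : Type*} (f : ι → A → A) : List ι → A → A
  | [] => id
  | i :: L => f i ∘ blockApp f L

/-- I-filter. -/
def IsIFilter {A ι : Type*} [Ririg A] (f : ι → A → A) (F : Set A) : Prop :=
  F.Nonempty ∧ (∀ x y : A, x ∈ F → x ≤ y → y ∈ F) ∧
    (∀ x y : A, x ∈ F → y ∈ F → x * y ∈ F) ∧ (∀ i : ι, ∀ x : A, x ∈ F → f i x ∈ F)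

/-- Congruence of an I-modal ririg. -/
def IsRirigCon {A ι : Type*} [Ririg A] (f : ι → A → A) (θ : A → A → Prop) : Prop :=
  Equivalence θ ∧
    (∀ a b c d : A, θ a b → θ c d → θ (a ⊔ c) (b ⊔ d)) ∧
    (∀ a b c d : A, θ a b → θ c d → θ (a * c) (b * d)) ∧
    (∀ a b c d : A, θ a b → θ c d → θ (a ⇨ c) (b ⇨ d)) ∧
    (∀ i : ι, ∀ a b : A, θ a b → θ (f i a) (f i b))

section Aux
set_option linter.unusedSectionVars false
variable {A : Type*} [Ririg A]

lemma rle_one (x : A) : x ≤ 1 := le_top.trans_eq Ririg.one_eq_top.symm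

lemma rmul_mono {y z : A} (h : y ≤ z) (x : A) : x * y ≤ x * z := by
  have hz : x * z = x * y ⊔ x * z := by rw [← Ririg.mul_sup, sup_eq_right.mpr h]
  rw [hz]; exact le_sup_left

lemma rmul_le_mul {a b c d : A} (h1 : a ≤ b) (h2 : c ≤ d) : a * c ≤ b * d := by
  refine le_trans (rmul_mono h2 a) ?_
  rw [mul_comm a d, mul_comm b d]; exact rmul_mono h1 d

lemma rmul_le_left (x y : A) : x * y ≤ x := by
  simpa using rmul_mono (rle_one y) x

lemma rmul_le_right (x y : A) : x * y ≤ y := by rw [mul_comm]; exact rmul_le_left y x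

lemma rle_iff (x y : A) : x ≤ y ↔ (1:A) ≤ x ⇨ y := by
  rw [← Ririg.residuation, one_mul]

lemma modal_mono {m : A → A} (hm : IsModal m) {x y : A} (h : x ≤ y) : m x ≤ m y := by
  have h1 : x ⇨ y = 1 := le_antisymm (rle_one _) ((rle_iff x y).mp h)
  have h2 := hm.2 x y
  rw [h1, hm.1] at h2
  exact (rle_iff _ _).mpr h2

lemma modal_supmul {m : A → A} (hm : IsModal m) (x y : A) : m x * m y ≤ m (x * y) := by
  have hx : x ≤ y ⇨ x * y := (Ririg.residuation x y (x*y)).mp le_rfl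
  have h := le_trans (modal_mono hm hx) (hm.2 y (x*y))
  exact (Ririg.residuation _ _ _).mpr h

variable {ι : Type*} [Fintype ι] (f : ι → A → A)

local notation "lam" => (fun x : A => x * ∏ i : ι, f i x)

lemma lam_le (x : A) : lam x ≤ x := rmul_le_left _ _

lemma prod_le_f (i : ι) (x : A) : (∏ j : ι, f j x) ≤ f i x := by
  classical
  rw [← Finset.mul_prod_erase Finset.univ (fun j => f j x) (Finset.mem_univ i)]
  exact rmul_le_left _ _

lemma lam_le_f (i : ι) (x : A) : lam x ≤ f i x :=
  le_trans (rmul_le_right _ _) (prod_le_f f i x)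

lemma lam_iter_anti (x : A) {l l' : ℕ} (h : l' ≤ l) : lam^[l] x ≤ lam^[l'] x := by
  induction h with
  | refl => exact le_rfl
  | step _ ih =>
      exact le_trans (by rw [Function.iterate_succ_apply']; exact lam_le f _) ih

lemma list_prod_le {xs ys : List A} (h : List.Forall₂ (· ≤ ·) xs ys) :
    xs.prod ≤ ys.prod := by
  induction h with
  | nil => exact le_rfl
  | cons h _ ih => simpa using rmul_le_mul h ih

lemma prod_map_modal {m : A → A} (hm : IsModal m) (g : A → A) (xs : List A) :
    (xs.map (fun x => m (g x))).prod ≤ m ((xs.map g).prod) := by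
  induction xs with
  | nil => simp [hm.1]
  | cons a t ih =>
      simp only [List.map_cons, List.prod_cons]
      exact le_trans (rmul_mono ih (m (g a))) (modal_supmul hm _ _)

lemma one_mem_filter {F : Set A} (hF : IsIFilter f F) : (1:A) ∈ F := by
  obtain ⟨⟨a, ha⟩, hup, _, _⟩ := hF
  exact hup a 1 ha (rle_one a)

lemma lam_mem_filter {F : Set A} (hF : IsIFilter f F) {x : A} (hx : x ∈ F) :
    lam x ∈ F := by
  obtain ⟨hne, hup, hmul, hmod⟩ := hF
  refine hmul _ _ hx ?_
  exact Finset.prod_induction (fun i => f i x) (· ∈ F) (fun a b ha hb => hmul a b ha hb)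
    (one_mem_filter f ⟨hne, hup, hmul, hmod⟩) (fun i _ => hmod i x hx)

end Aux

theorem stmt11 {A ι : Type*} [Ririg A] [Fintype ι] (f : ι → A → A)
    (hf : ∀ i, IsModal (f i)) (X : Set A) :
    IsLeast {F : Set A | IsIFilter f F ∧ X ⊆ F}
      {y : A | ∃ (l : ℕ) (xs : List A), (∀ x ∈ xs, x ∈ X) ∧
        (xs.map (fun x : A => x * ∏ i : ι, f i x)^[l]).prod ≤ y} := by
  set lam := (fun x : A => x * ∏ i : ι, f i x) with hlam
  refine ⟨⟨⟨⟨1, 0, [], by simp, by simp⟩, ?_, ?_, ?_⟩, ?_⟩, ?_⟩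
  · rintro x y ⟨l, xs, hxs, hle⟩ hxy
    exact ⟨l, xs, hxs, hle.trans hxy⟩
  · rintro x y ⟨l1, xs1, hxs1, h1⟩ ⟨l2, xs2, hxs2, h2⟩
    refine ⟨max l1 l2, xs1 ++ xs2, ?_, ?_⟩
    · intro z hz
      rcases List.mem_append.mp hz with h | h
      exacts [hxs1 z h, hxs2 z h]
    · rw [List.map_append, List.prod_append]
      refine rmul_le_mul (le_trans ?_ h1) (le_trans ?_ h2)
      · refine list_prod_le (List.forall₂_map_right_iff.mpr ?_)
        rw [List.forall₂_map_left_iff]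
        exact List.forall₂_same.mpr fun z _ => lam_iter_anti f z (le_max_left _ _)
      · refine list_prod_le (List.forall₂_map_right_iff.mpr ?_)
        rw [List.forall₂_map_left_iff]
        exact List.forall₂_same.mpr fun z _ => lam_iter_anti f z (le_max_right _ _)
  · rintro i x ⟨l, xs, hxs, hle⟩
    refine ⟨l + 1, xs, hxs, ?_⟩
    have step : ∀ z : A, lam^[l+1] z ≤ f i (lam^[l] z) := fun z => by
      rw [Function.iterate_succ_apply']
      exact lam_le_f f i _
    calc (xs.map lam^[l+1]).prod ≤ (xs.map (fun z => f i (lam^[l] z))).prod := by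
            refine list_prod_le (List.forall₂_map_right_iff.mpr ?_)
            rw [List.forall₂_map_left_iff]
            exact List.forall₂_same.mpr fun z _ => step z
      _ ≤ f i ((xs.map lam^[l]).prod) := prod_map_modal (hf i) _ xs
      _ ≤ f i x := modal_mono (hf i) hle
  · intro x hx
    exact ⟨0, [x], by simpa using hx, by simp⟩
  · rintro F ⟨hF, hXF⟩ y ⟨l, xs, hxs, hle⟩
    have hlamit : ∀ (k : ℕ) (z : A), z ∈ F → lam^[k] z ∈ F := by
      intro k
      induction k with
      | zero => intro z hz; simpa using hz
      | succ n ih =>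
          intro z hz
          rw [Function.iterate_succ_apply']
          exact lam_mem_filter f hF (ih z hz)
    have hprod : ∀ ys : List A, (∀ x ∈ ys, x ∈ X) → (ys.map lam^[l]).prod ∈ F := by
      intro ys hys
      induction ys with
      | nil => simpa using one_mem_filter f hF
      | cons a t ih =>
          simp only [List.map_cons, List.prod_cons]
          exact hF.2.2.1 _ _ (hlamit l a (hXF (hys a (by simp))))
            (ih (fun z hz => hys z (List.mem_cons_of_mem a hz)))
    exact hF.2.1 _ _ (hprod xs hxs) hle
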